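/- Let γ ∈ (0,1), β > 0 and ε ∈ (0,1). For k ≥ 1 define μ^ε_{≥k} := (1/(1−ε)) · B(k, β/γ)^{−1} · ∫_ε^1 ∫_{y^γ}^1 x^{β/γ − 1} (1−x)^{k−1} dx dy. Then lim_{k→∞} (log μ^ε_{≥k}) / k = log(1 − ε^γ). -/

import Mathlib

/-- The beta function `B(s,t) = ∫_0^1 x^{s-1} (1-x)^{t-1} dx`. -/
noncomputable def betaFn (s t : ℝ) : ℝ :=
  ∫ x in (0 : ℝ)..1, x ^ (s - 1) * (1 - x) ^ (t - 1)

/-- The tail `μ^ε_{≥ k}` of the asymptotic indegree distribution of the damaged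
preferential attachment network. -/
noncomputable def muTail (γ β ε : ℝ) (k : ℕ) : ℝ :=
  (1 / (1 - ε)) * (betaFn k (β / γ))⁻¹ *
    ∫ y in ε..1, ∫ x in (y ^ γ)..1, x ^ (β / γ - 1) * (1 - x) ^ (k - 1)

open MeasureTheory intervalIntegral Real Filter Set

lemma aux_int_pow (n : ℕ) (b : ℝ) :
    ∫ x in b..1, (1 - x) ^ n = (1 - b) ^ (n + 1) / (n + 1) := by
  have := intervalIntegral.integral_comp_sub_left (fun u : ℝ => u ^ n) 1 (a := b) (b := 1)
  simp only [sub_self] at this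
  rw [this, integral_pow]
  simp

lemma aux_int_rpow {c : ℝ} (hc : 0 < c) (b : ℝ) :
    ∫ x in b..1, (1 - x) ^ (c - 1) = (1 - b) ^ c / c := by
  have := intervalIntegral.integral_comp_sub_left (fun u : ℝ => u ^ (c - 1)) 1 (a := b) (b := 1)
  simp only [sub_self] at this
  rw [this, integral_rpow (Or.inl (by linarith))]
  rw [sub_add_cancel, Real.zero_rpow hc.ne']
  ring

lemma aux_rpow_bounds {a : ℝ} (ha : 0 < a) (r : ℝ) {x : ℝ} (hx : a ≤ x) (hx1 : x ≤ 1) :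
    min (a ^ r) 1 ≤ x ^ r ∧ x ^ r ≤ max (a ^ r) 1 := by
  have hx0 : 0 < x := lt_of_lt_of_le ha hx
  rcases le_or_gt 0 r with hr | hr
  · constructor
    · exact le_trans (min_le_left _ _) (Real.rpow_le_rpow ha.le hx hr)
    · calc x ^ r ≤ 1 ^ r := Real.rpow_le_rpow hx0.le hx1 hr
        _ = 1 := Real.one_rpow r
        _ ≤ max (a ^ r) 1 := le_max_right _ _
  · constructor
    · calc min (a ^ r) 1 ≤ 1 := min_le_right _ _
        _ = 1 ^ r := (Real.one_rpow r).symm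
        _ ≤ x ^ r := Real.rpow_le_rpow_of_nonpos hx0 hx1 hr.le
    · exact le_trans (Real.rpow_le_rpow_of_nonpos ha hx hr.le) (le_max_left _ _)

lemma aux_integrable_g {r : ℝ} (n : ℕ) {b b' : ℝ} (hb : 0 < b) (hbb : b ≤ b') :
    IntervalIntegrable (fun x : ℝ => x ^ r * (1 - x) ^ n) volume b b' := by
  apply ContinuousOn.intervalIntegrable
  apply ContinuousOn.mul
  · intro x hx
    rw [Set.uIcc_of_le hbb] at hx
    exact (Real.continuousAt_rpow_const x r (Or.inl (ne_of_gt (lt_of_lt_of_le hb hx.1)))).continuousWithinAt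
  · fun_prop

lemma aux_bern {k : ℕ} (hk : 1 ≤ k) : 1 / (k:ℝ) ≤ (1 - 1/(k:ℝ)) ^ (k - 1) := by
  have hK : (1:ℝ) ≤ (k:ℝ) := by exact_mod_cast hk
  have hKpos : (0:ℝ) < (k:ℝ) := by linarith
  have h1K : 1 / (k:ℝ) ≤ 1 := by rw [div_le_one hKpos]; exact hK
  have h0K : 0 < 1 / (k:ℝ) := by positivity
  have hber := one_add_mul_le_pow (show (-2:ℝ) ≤ -(1/(k:ℝ)) by linarith) (k - 1)
  have hcast2 : ((k - 1 : ℕ) : ℝ) = (k:ℝ) - 1 := by rw [Nat.cast_sub hk]; simp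
  rw [hcast2] at hber
  have heq : 1 + ((k:ℝ) - 1) * -(1 / (k:ℝ)) = 1 / (k:ℝ) := by field_simp; ring
  rw [heq] at hber
  simpa [sub_eq_add_neg] using hber

lemma aux_inner_le {r M : ℝ} (n : ℕ) {b : ℝ} (hb : 0 < b) (hb1 : b ≤ 1)
    (hM : ∀ x ∈ Icc b 1, x ^ r ≤ M) :
    ∫ x in b..1, x ^ r * (1 - x) ^ n ≤ M * ((1 - b) ^ (n + 1) / (n + 1)) := by
  have h1 := aux_integrable_g n hb hb1 (r := r)
  have h2 : IntervalIntegrable (fun x : ℝ => M * (1 - x) ^ n) volume b 1 := by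
    apply ContinuousOn.intervalIntegrable; fun_prop
  have hmono := intervalIntegral.integral_mono_on hb1 h1 h2 ?_
  · rw [intervalIntegral.integral_const_mul, aux_int_pow] at hmono
    exact hmono
  · intro x hx
    exact mul_le_mul_of_nonneg_right (hM x hx) (pow_nonneg (by linarith [hx.2]) n)

lemma aux_inner_ge {r m : ℝ} (n : ℕ) {b : ℝ} (hb : 0 < b) (hb1 : b ≤ 1)
    (hm : ∀ x ∈ Icc b 1, m ≤ x ^ r) :
    m * ((1 - b) ^ (n + 1) / (n + 1)) ≤ ∫ x in b..1, x ^ r * (1 - x) ^ n := by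
  have h1 := aux_integrable_g n hb hb1 (r := r)
  have h2 : IntervalIntegrable (fun x : ℝ => m * (1 - x) ^ n) volume b 1 := by
    apply ContinuousOn.intervalIntegrable; fun_prop
  have hmono := intervalIntegral.integral_mono_on hb1 h2 h1 ?_
  · rw [intervalIntegral.integral_const_mul, aux_int_pow] at hmono
    exact hmono
  · intro x hx
    exact mul_le_mul_of_nonneg_right (hm x hx) (pow_nonneg (by linarith [hx.2]) n)

lemma aux_antitone {γ r : ℝ} (hγ : 0 < γ) {ε : ℝ} (hε : 0 < ε) (n : ℕ) :
    AntitoneOn (fun y : ℝ => ∫ x in (y ^ γ)..1, x ^ r * (1 - x) ^ n) (Icc ε 1) := by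
  intro y1 h1 y2 h2 h12
  have hy1 : 0 < y1 := lt_of_lt_of_le hε h1.1
  have hb1 : 0 < y1 ^ γ := Real.rpow_pos_of_pos hy1 γ
  have hbb : y1 ^ γ ≤ y2 ^ γ := Real.rpow_le_rpow hy1.le h12 hγ.le
  have hy2 : 0 ≤ y2 := (lt_of_lt_of_le hε (le_trans h1.1 h12)).le
  have hb2 : y2 ^ γ ≤ 1 := Real.rpow_le_one hy2 h2.2 hγ.le
  simp only
  rw [← intervalIntegral.integral_add_adjacent_intervals
    (aux_integrable_g n hb1 hbb) (aux_integrable_g n (lt_of_lt_of_le hb1 hbb) hb2)]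
  have : 0 ≤ ∫ x in (y1 ^ γ)..(y2 ^ γ), x ^ r * (1 - x) ^ n := by
    apply intervalIntegral.integral_nonneg hbb
    intro x hx
    have hx1 : x ≤ 1 := le_trans hx.2 hb2
    exact mul_nonneg (Real.rpow_nonneg (le_trans hb1.le hx.1) _)
      (pow_nonneg (by linarith) _)
  linarith

lemma aux_beta_integrand_int {c : ℝ} (hc : 0 < c) {p : ℝ} (hp : 0 ≤ p) :
    IntervalIntegrable (fun x : ℝ => x ^ p * (1 - x) ^ (c - 1)) volume 0 1 := by
  have h2 : IntervalIntegrable (fun x : ℝ => (1 - x) ^ (c - 1)) volume 0 1 := by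
    have h := intervalIntegral.intervalIntegrable_rpow' (show (-1:ℝ) < c - 1 by linarith)
      (a := 0) (b := 1)
    have := h.comp_sub_left 1
    simpa using this.symm
  apply h2.continuousOn_mul
  intro x hx
  exact (Real.continuousAt_rpow_const x p (Or.inr hp)).continuousWithinAt

lemma aux_beta_le {c : ℝ} (hc : 0 < c) {k : ℕ} (hk : 1 ≤ k) : betaFn k c ≤ 1 / c := by
  have hp : (0:ℝ) ≤ (k:ℝ) - 1 := by
    have : (1:ℝ) ≤ (k:ℝ) := by exact_mod_cast hk
    linarith
  have h2 : IntervalIntegrable (fun x : ℝ => (1 - x) ^ (c - 1)) volume 0 1 := by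
    have h := intervalIntegral.intervalIntegrable_rpow' (show (-1:ℝ) < c - 1 by linarith)
      (a := 0) (b := 1)
    have := h.comp_sub_left 1
    simpa using this.symm
  have hmono := intervalIntegral.integral_mono_on (by norm_num : (0:ℝ) ≤ 1)
    (aux_beta_integrand_int hc hp) h2 ?_
  · rw [aux_int_rpow hc 0] at hmono
    simpa [betaFn] using hmono
  · intro x hx
    exact mul_le_of_le_one_left (Real.rpow_nonneg (by linarith [hx.2]) _)
      (Real.rpow_le_one hx.1 hx.2 hp)

lemma aux_beta_ge {c : ℝ} (hc : 0 < c) {k : ℕ} (hk : 1 ≤ k) :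
    (1 / (k:ℝ)) * ((1 / (k:ℝ)) ^ c / c) ≤ betaFn k c := by
  have hK : (1:ℝ) ≤ (k:ℝ) := by exact_mod_cast hk
  have hKpos : (0:ℝ) < (k:ℝ) := by linarith
  set K := (k:ℝ) with hKdef
  have hp : (0:ℝ) ≤ K - 1 := by linarith
  set b : ℝ := 1 - 1 / K with hbdef
  have hb0 : 0 ≤ b := by
    rw [hbdef, sub_nonneg, div_le_one hKpos]; exact hK
  have hb1 : b ≤ 1 := by
    have h01 : 0 < 1 / K := by positivity
    rw [hbdef]; linarith
  have hfull := aux_beta_integrand_int hc hp (c := c)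
  have hsub1 : Set.uIcc 0 b ⊆ Set.uIcc (0:ℝ) 1 := by
    rw [Set.uIcc_of_le hb0, Set.uIcc_of_le (show (0:ℝ) ≤ 1 by norm_num)]
    exact Set.Icc_subset_Icc le_rfl hb1
  have hsub2 : Set.uIcc b 1 ⊆ Set.uIcc (0:ℝ) 1 := by
    rw [Set.uIcc_of_le hb1, Set.uIcc_of_le (show (0:ℝ) ≤ 1 by norm_num)]
    exact Set.Icc_subset_Icc hb0 le_rfl
  have hleft : IntervalIntegrable (fun x : ℝ => x ^ (K - 1) * (1 - x) ^ (c - 1)) volume 0 b :=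
    hfull.mono_set hsub1
  have hright : IntervalIntegrable (fun x : ℝ => x ^ (K - 1) * (1 - x) ^ (c - 1)) volume b 1 :=
    hfull.mono_set hsub2
  have h2 : IntervalIntegrable (fun x : ℝ => (1 / K) * (1 - x) ^ (c - 1)) volume b 1 := by
    have h := intervalIntegral.intervalIntegrable_rpow' (show (-1:ℝ) < c - 1 by linarith)
      (a := 0) (b := 1)
    have h' := (h.comp_sub_left 1).symm
    simp only [sub_zero, sub_self] at h'
    exact (h'.mono_set hsub2).const_mul _
  -- pointwise bound on [b,1]
  have hpt : ∀ x ∈ Icc b 1, (1 / K) * (1 - x) ^ (c - 1) ≤ x ^ (K - 1) * (1 - x) ^ (c - 1) := by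
    intro x hx
    have hxK : 1 / K ≤ x ^ (K - 1) := by
      have h1 : b ^ (K - 1) ≤ x ^ (K - 1) := Real.rpow_le_rpow hb0 hx.1 hp
      have hcast : K - 1 = ((k - 1 : ℕ) : ℝ) := by
        rw [Nat.cast_sub hk]; simp [hKdef]
      have h2 : (1:ℝ) / K ≤ b ^ (K - 1) := by
        rw [hcast, Real.rpow_natCast]
        have h1K : 1 / K ≤ 1 := by rw [div_le_one hKpos]; exact hK
        have h0K : 0 < 1 / K := by positivity
        have hber := one_add_mul_le_pow (show (-2:ℝ) ≤ -(1/K) by linarith) (k - 1)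
        have hcast2 : ((k - 1 : ℕ) : ℝ) = K - 1 := by rw [Nat.cast_sub hk]; simp [hKdef]
        rw [hcast2] at hber
        have heq : 1 + (K - 1) * -(1 / K) = 1 / K := by field_simp; ring
        rw [heq] at hber
        simpa [hbdef, sub_eq_add_neg] using hber
      linarith
    exact mul_le_mul_of_nonneg_right hxK (Real.rpow_nonneg (by linarith [hx.2]) _)
  have hmono := intervalIntegral.integral_mono_on hb1 h2 hright hpt
  rw [intervalIntegral.integral_const_mul, aux_int_rpow hc b] at hmono
  have hnn : 0 ≤ ∫ x in (0:ℝ)..b, x ^ (K - 1) * (1 - x) ^ (c - 1) := by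
    apply intervalIntegral.integral_nonneg hb0
    intro x hx
    have hx1 : x ≤ 1 := le_trans hx.2 hb1
    exact mul_nonneg (Real.rpow_nonneg hx.1 _) (Real.rpow_nonneg (by linarith) _)
  have hsplit := intervalIntegral.integral_add_adjacent_intervals hleft hright
  have h1b : 1 - b = 1 / K := by simp [hbdef]
  rw [h1b] at hmono
  have : betaFn k c = (∫ x in (0:ℝ)..b, x ^ (K - 1) * (1 - x) ^ (c - 1))
      + ∫ x in b..1, x ^ (K - 1) * (1 - x) ^ (c - 1) := by
    rw [hsplit]; rfl
  linarith

lemma aux_upper (γ β ε : ℝ) (hγ : γ ∈ Set.Ioo (0:ℝ) 1) (hβ : 0 < β) (hε : ε ∈ Set.Ioo (0:ℝ) 1)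
    {k : ℕ} (hk : 1 ≤ k) :
    muTail γ β ε k ≤
      (β/γ) * max ((ε^γ)^(β/γ-1)) 1 * ((k:ℝ)^(β/γ) * (1-ε^γ)^k) := by
  obtain ⟨hγ0, hγ1⟩ := hγ
  obtain ⟨hε0, hε1⟩ := hε
  set c := β / γ with hcdef
  have hc : 0 < c := div_pos hβ hγ0
  set a := ε ^ γ with hadef
  have ha0 : 0 < a := Real.rpow_pos_of_pos hε0 γ
  have ha1 : a < 1 := Real.rpow_lt_one hε0.le hε1 hγ0
  set M := max (a ^ (c - 1)) 1 with hMdef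
  have hM0 : (0:ℝ) < M := lt_of_lt_of_le one_pos (le_max_right _ _)
  set K := (k:ℝ) with hKdef
  have hK1 : (1:ℝ) ≤ K := by rw [hKdef]; exact_mod_cast hk
  have hKpos : (0:ℝ) < K := by linarith
  have hkk : k - 1 + 1 = k := by omega
  have hkcast : ((k - 1 : ℕ) : ℝ) + 1 = K := by
    rw [Nat.cast_sub hk]; push_cast; ring
  -- nonnegativity of the inner integral
  have hinner_nonneg : ∀ y ∈ Icc ε 1, 0 ≤ ∫ x in (y^γ)..1, x ^ (c-1) * (1-x) ^ (k-1) := by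
    intro y hy
    have hy0 : 0 < y := lt_of_lt_of_le hε0 hy.1
    have hb1 : y ^ γ ≤ 1 := Real.rpow_le_one hy0.le hy.2 hγ0.le
    apply intervalIntegral.integral_nonneg hb1
    intro x hx
    have hx0 : 0 ≤ x := le_trans (Real.rpow_pos_of_pos hy0 γ).le hx.1
    exact mul_nonneg (Real.rpow_nonneg hx0 _) (pow_nonneg (by linarith [hx.2]) _)
  -- bound on the inner integral
  have h_inner_bound : ∀ y ∈ Set.uIoc ε 1,
      ‖∫ x in (y^γ)..1, x ^ (c-1) * (1-x) ^ (k-1)‖ ≤ M * (1-a)^k / K := by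
    intro y hy
    rw [Set.uIoc_of_le hε1.le] at hy
    have hy0 : 0 < y := lt_trans hε0 hy.1
    have hb0 : 0 < y ^ γ := Real.rpow_pos_of_pos hy0 γ
    have hab : a ≤ y ^ γ := Real.rpow_le_rpow hε0.le hy.1.le hγ0.le
    have hb1 : y ^ γ ≤ 1 := Real.rpow_le_one hy0.le hy.2 hγ0.le
    have hIn := aux_inner_le (k-1) hb0 hb1
      (fun x hx => (aux_rpow_bounds ha0 (c-1) (le_trans hab hx.1) hx.2).2)
    rw [hkk, hkcast] at hIn
    have hnn := hinner_nonneg y ⟨hy.1.le, hy.2⟩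
    rw [Real.norm_eq_abs, abs_of_nonneg hnn]
    calc (∫ x in (y^γ)..1, x ^ (c-1) * (1-x) ^ (k-1))
        ≤ M * ((1 - y^γ)^k / K) := hIn
      _ ≤ M * ((1-a)^k / K) := by
          have h1 : (0:ℝ) ≤ 1 - y^γ := by linarith
          have h2 : 1 - y^γ ≤ 1 - a := by linarith
          gcongr
      _ = M * (1-a)^k / K := by ring
  -- bound on the double integral
  have hI_le : (∫ y in ε..1, ∫ x in (y^γ)..1, x ^ (c-1) * (1-x) ^ (k-1))
      ≤ M * (1-a)^k / K * (1 - ε) := by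
    have h := intervalIntegral.norm_integral_le_of_norm_le_const h_inner_bound
    rw [abs_of_nonneg (by linarith : (0:ℝ) ≤ 1 - ε)] at h
    exact le_trans (le_abs_self _) h
  have hI_nonneg : 0 ≤ ∫ y in ε..1, ∫ x in (y^γ)..1, x ^ (c-1) * (1-x) ^ (k-1) := by
    exact intervalIntegral.integral_nonneg hε1.le fun y hy => hinner_nonneg y hy
  -- beta function bound
  have hBl := aux_beta_ge hc hk
  have hBlval : (1 / K) * ((1 / K) ^ c / c) = (c * (K * K ^ c))⁻¹ := by
    rw [one_div, Real.inv_rpow hKpos.le]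
    field_simp
  have hBpos : 0 < betaFn K c := lt_of_lt_of_le (by positivity) hBl
  have hβinv : (betaFn K c)⁻¹ ≤ c * (K * K ^ c) := by
    have h2 := inv_anti₀ (show (0:ℝ) < (1 / K) * ((1 / K) ^ c / c) by positivity) hBl
    rw [hBlval, inv_inv] at h2
    exact h2
  -- assemble
  have hP : (0:ℝ) < 1 / (1 - ε) := by
    have : (0:ℝ) < 1 - ε := by linarith
    positivity
  have hmu : muTail γ β ε k = (1 / (1 - ε)) * (betaFn K c)⁻¹ *
      ∫ y in ε..1, ∫ x in (y^γ)..1, x ^ (c-1) * (1-x) ^ (k-1) := rfl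
  rw [hmu]
  calc (1 / (1 - ε)) * (betaFn K c)⁻¹ *
        (∫ y in ε..1, ∫ x in (y^γ)..1, x ^ (c-1) * (1-x) ^ (k-1))
      ≤ (1 / (1 - ε)) * (c * (K * K ^ c)) *
        (∫ y in ε..1, ∫ x in (y^γ)..1, x ^ (c-1) * (1-x) ^ (k-1)) := by
        apply mul_le_mul_of_nonneg_right _ hI_nonneg
        exact mul_le_mul_of_nonneg_left hβinv hP.le
    _ ≤ (1 / (1 - ε)) * (c * (K * K ^ c)) * (M * (1-a)^k / K * (1 - ε)) := by
        apply mul_le_mul_of_nonneg_left hI_le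
        positivity
    _ = c * M * (K ^ c * (1-a)^k) := by
        have hε' : (1:ℝ) - ε ≠ 0 := by linarith
        field_simp

lemma aux_lower (γ β ε : ℝ) (hγ : γ ∈ Set.Ioo (0:ℝ) 1) (hβ : 0 < β) (hε : ε ∈ Set.Ioo (0:ℝ) 1)
    {k : ℕ} (hk : 2 ≤ k) (hkN : (1-ε^γ)/(ε^(γ-1)*(1-ε)) ≤ (k:ℝ)) :
    (1/(1-ε)) * (β/γ) * (min ((ε^γ)^(β/γ-1)) 1 * (1-ε^γ)^(k+1) / (2 * ε^(γ-1) * (k:ℝ)^3))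
      ≤ muTail γ β ε k := by
  obtain ⟨hγ0, hγ1⟩ := hγ
  obtain ⟨hε0, hε1⟩ := hε
  have hk1 : 1 ≤ k := by omega
  set c := β / γ with hcdef
  have hc : 0 < c := div_pos hβ hγ0
  set a := ε ^ γ with hadef
  have ha0 : 0 < a := Real.rpow_pos_of_pos hε0 γ
  have ha1 : a < 1 := Real.rpow_lt_one hε0.le hε1 hγ0
  have h1a : (0:ℝ) < 1 - a := by linarith
  have h1ε : (0:ℝ) < 1 - ε := by linarith
  set m := min (a ^ (c - 1)) 1 with hmdef
  have hm0 : (0:ℝ) < m := lt_min (Real.rpow_pos_of_pos ha0 _) one_pos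
  set D := ε ^ (γ - 1) with hDdef
  have hD0 : (0:ℝ) < D := Real.rpow_pos_of_pos hε0 _
  set K := (k:ℝ) with hKdef
  have hK2 : (2:ℝ) ≤ K := by rw [hKdef]; exact_mod_cast hk
  have hKpos : (0:ℝ) < K := by linarith
  have hkk : k - 1 + 1 = k := by omega
  have hkcast : ((k - 1 : ℕ) : ℝ) + 1 = K := by
    rw [Nat.cast_sub hk1]; push_cast; ring
  set s : ℝ := (1-a)/(D*K) with hsdef
  have hs0 : 0 < s := by positivity
  set t : ℝ := ε + s with htdef
  have htε : ε < t := by rw [htdef]; linarith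
  have ht0 : 0 < t := by linarith
  have ht1 : t ≤ 1 := by
    rw [div_le_iff₀ (by positivity)] at hkN
    have hsle : s ≤ 1 - ε := by
      rw [hsdef, div_le_iff₀ (by positivity)]
      nlinarith
    rw [htdef]; linarith
  -- bound t^γ
  have hDs : D * s = (1-a)/K := by
    rw [hsdef]
    field_simp
  have hDε : D * ε = a := by
    rw [hDdef, hadef]
    rw [← Real.rpow_add_one hε0.ne' (γ-1)]
    norm_num
  have htγ : t ^ γ ≤ a + (1-a)/K := by
    have h1 : t ^ (γ-1) ≤ ε ^ (γ-1) := Real.rpow_le_rpow_of_nonpos hε0 htε.le (by linarith)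
    have h2 : t ^ γ = t ^ (γ-1) * t := by
      rw [← Real.rpow_add_one ht0.ne' (γ-1)]
      norm_num
    calc t ^ γ = t ^ (γ-1) * t := h2
      _ ≤ D * t := mul_le_mul_of_nonneg_right h1 ht0.le
      _ = D * ε + D * s := by rw [htdef]; ring
      _ = a + (1-a)/K := by rw [hDε, hDs]
  have h1t : (1-a)*(1-1/K) ≤ 1 - t ^ γ := by
    have hexp : (1-a)*(1-1/K) = 1 - a - (1-a)/K := by ring
    linarith
  have h1t0 : 0 ≤ (1-a)*(1-1/K) := by
    have h1K : 1/K ≤ 1 := by rw [div_le_one hKpos]; linarith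
    have : (0:ℝ) ≤ 1 - 1/K := by linarith
    positivity
  -- lower bound inner integral at t
  have hbt0 : 0 < t ^ γ := Real.rpow_pos_of_pos ht0 γ
  have hbt1 : t ^ γ ≤ 1 := Real.rpow_le_one ht0.le ht1 hγ0.le
  have hat : a ≤ t ^ γ := Real.rpow_le_rpow hε0.le htε.le hγ0.le
  have hIn := aux_inner_ge (k-1) hbt0 hbt1
    (fun x hx => (aux_rpow_bounds ha0 (c-1) (le_trans hat hx.1) hx.2).1)
  rw [hkk, hkcast] at hIn
  -- pow chains
  have hpowk : ((1-a)*(1-1/K))^k ≤ (1 - t^γ)^k := pow_le_pow_left₀ h1t0 h1t k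
  have hbernk : (1:ℝ)/K * (1/2) ≤ (1-1/K)^k := by
    have hhalf : (1:ℝ)/2 ≤ 1 - 1/K := by
      have : 1/K ≤ 1/2 := by
        rw [div_le_div_iff₀ hKpos (by norm_num)]; linarith
      linarith
    calc (1:ℝ)/K * (1/2) ≤ (1-1/K)^(k-1) * (1-1/K) :=
          mul_le_mul (aux_bern hk1) hhalf (by norm_num) (pow_nonneg (by linarith) _)
      _ = (1-1/K)^k := by rw [← pow_succ, hkk]
  have hfact : (1-a)^k * ((1:ℝ)/K * (1/2)) ≤ ((1-a)*(1-1/K))^k := by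
    rw [mul_pow]
    exact mul_le_mul_of_nonneg_left hbernk (pow_nonneg (by linarith) _)
  have hInt : m * ((1-a)^k * ((1:ℝ)/K * (1/2)) / K)
      ≤ ∫ x in (t^γ)..1, x ^ (c-1) * (1-x) ^ (k-1) := by
    refine le_trans ?_ hIn
    exact mul_le_mul_of_nonneg_left
      (div_le_div_of_nonneg_right (le_trans hfact hpowk) hKpos.le) hm0.le
  -- nonnegativity of inner integrals
  have hinner_nonneg : ∀ y ∈ Icc ε 1, 0 ≤ ∫ x in (y^γ)..1, x ^ (c-1) * (1-x) ^ (k-1) := by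
    intro y hy
    have hy0 : 0 < y := lt_of_lt_of_le hε0 hy.1
    apply intervalIntegral.integral_nonneg (Real.rpow_le_one hy0.le hy.2 hγ0.le)
    intro x hx
    have hx0 : 0 ≤ x := le_trans (Real.rpow_pos_of_pos hy0 γ).le hx.1
    exact mul_nonneg (Real.rpow_nonneg hx0 _) (pow_nonneg (by linarith [hx.2]) _)
  -- lower bound on the double integral
  have hanti : AntitoneOn (fun y : ℝ => ∫ x in (y^γ)..1, x ^ (c-1) * (1-x) ^ (k-1)) (Icc ε 1) :=
    aux_antitone hγ0 hε0 (k-1)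
  have hint1 : IntervalIntegrable
      (fun y : ℝ => ∫ x in (y^γ)..1, x ^ (c-1) * (1-x) ^ (k-1)) volume ε t := by
    apply AntitoneOn.intervalIntegrable
    rw [Set.uIcc_of_le htε.le]
    exact hanti.mono (Set.Icc_subset_Icc le_rfl ht1)
  have hint2 : IntervalIntegrable
      (fun y : ℝ => ∫ x in (y^γ)..1, x ^ (c-1) * (1-x) ^ (k-1)) volume t 1 := by
    apply AntitoneOn.intervalIntegrable
    rw [Set.uIcc_of_le ht1]
    exact hanti.mono (Set.Icc_subset_Icc htε.le le_rfl)
  have hsplit := intervalIntegral.integral_add_adjacent_intervals hint1 hint2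
  have h2nn : 0 ≤ ∫ y in t..1, ∫ x in (y^γ)..1, x ^ (c-1) * (1-x) ^ (k-1) :=
    intervalIntegral.integral_nonneg ht1
      (fun y hy => hinner_nonneg y ⟨le_trans htε.le hy.1, hy.2⟩)
  have hmono2 : (t - ε) * (∫ x in (t^γ)..1, x ^ (c-1) * (1-x) ^ (k-1))
      ≤ ∫ y in ε..t, ∫ x in (y^γ)..1, x ^ (c-1) * (1-x) ^ (k-1) := by
    have hmem_t : t ∈ Icc ε 1 := ⟨htε.le, ht1⟩
    have h := intervalIntegral.integral_mono_on htε.le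
      (_root_.intervalIntegrable_const
        (c := ∫ x in (t^γ)..1, x ^ (c-1) * (1-x) ^ (k-1))) hint1
      (fun y hy => hanti ⟨hy.1, le_trans hy.2 ht1⟩ hmem_t hy.2)
    simpa [intervalIntegral.integral_const, smul_eq_mul] using h
  set Ilow : ℝ := s * (m * ((1-a)^k * ((1:ℝ)/K * (1/2)) / K)) with hIlowdef
  have hIlow0 : 0 < Ilow := by positivity
  have hI_ge : Ilow ≤ ∫ y in ε..1, ∫ x in (y^γ)..1, x ^ (c-1) * (1-x) ^ (k-1) := by
    rw [← hsplit]
    have hts : t - ε = s := by rw [htdef]; ring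
    have h3 : Ilow ≤ (t - ε) * (∫ x in (t^γ)..1, x ^ (c-1) * (1-x) ^ (k-1)) := by
      rw [hts, hIlowdef]
      exact mul_le_mul_of_nonneg_left hInt hs0.le
    linarith
  have hI_nonneg : 0 ≤ ∫ y in ε..1, ∫ x in (y^γ)..1, x ^ (c-1) * (1-x) ^ (k-1) :=
    le_trans hIlow0.le hI_ge
  -- beta function bound
  have hBpos : 0 < betaFn K c := lt_of_lt_of_le (by positivity) (aux_beta_ge hc hk1)
  have hβinv : c ≤ (betaFn K c)⁻¹ := by
    have h2 := inv_anti₀ hBpos (aux_beta_le hc hk1)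
    rw [one_div, inv_inv] at h2
    exact h2
  have hP : (0:ℝ) < 1/(1-ε) := by positivity
  have hmu : muTail γ β ε k = (1 / (1 - ε)) * (betaFn K c)⁻¹ *
      ∫ y in ε..1, ∫ x in (y^γ)..1, x ^ (c-1) * (1-x) ^ (k-1) := rfl
  have hval : m * (1-a)^(k+1) / (2*D*K^3) = Ilow := by
    rw [hIlowdef, hsdef, pow_succ]
    field_simp
  rw [hmu]
  calc (1/(1-ε)) * c * (m * (1-a)^(k+1) / (2*D*K^3))
      = (1/(1-ε)) * c * Ilow := by rw [hval]
    _ ≤ (1/(1-ε)) * c *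
        (∫ y in ε..1, ∫ x in (y^γ)..1, x ^ (c-1) * (1-x) ^ (k-1)) :=
        mul_le_mul_of_nonneg_left hI_ge (by positivity)
    _ ≤ (1/(1-ε)) * (betaFn K c)⁻¹ *
        (∫ y in ε..1, ∫ x in (y^γ)..1, x ^ (c-1) * (1-x) ^ (k-1)) :=
        mul_le_mul_of_nonneg_right (mul_le_mul_of_nonneg_left hβinv hP.le) hI_nonneg

lemma aux_tendsto (C1 C2 C3 L : ℝ) :
    Filter.Tendsto (fun k : ℕ => (C1 + ((k:ℝ)+C2)*L + C3 * Real.log k)/(k:ℝ))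
      Filter.atTop (nhds L) := by
  have hlog : Tendsto (fun k : ℕ => Real.log k / (k:ℝ)) atTop (nhds 0) :=
    (Real.isLittleO_log_id_atTop.tendsto_div_nhds_zero).comp tendsto_natCast_atTop_atTop
  have hc1 : Tendsto (fun k : ℕ => (C1 + C2*L) / (k:ℝ)) atTop (nhds 0) :=
    tendsto_const_div_atTop_nhds_zero_nat _
  have hsum : Tendsto (fun k : ℕ => (C1 + C2*L)/(k:ℝ) + C3 * (Real.log k / (k:ℝ)) + L)
      atTop (nhds (0 + C3 * 0 + L)) :=
    (hc1.add (hlog.const_mul C3)).add tendsto_const_nhds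
  rw [show (0:ℝ) + C3 * 0 + L = L by ring] at hsum
  apply hsum.congr'
  filter_upwards [eventually_ge_atTop 1] with k hk
  have hK : (0:ℝ) < (k:ℝ) := by exact_mod_cast Nat.pos_of_ne_zero (by omega)
  field_simp
  ring

/-- For `γ ∈ (0,1)`, `β > 0`, `ε ∈ (0,1)`, the tails of the asymptotic
indegree distribution of the damaged network satisfy
`lim_{k→∞} (log μ^ε_{≥k})/k = log(1 − ε^γ)`. -/
theorem log_muTail_div_tendsto (γ β ε : ℝ) (hγ : γ ∈ Set.Ioo (0 : ℝ) 1) (hβ : 0 < β)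
    (hε : ε ∈ Set.Ioo (0 : ℝ) 1) :
    Filter.Tendsto (fun k : ℕ => Real.log (muTail γ β ε k) / k)
      Filter.atTop (nhds (Real.log (1 - ε ^ γ))) := by
  obtain ⟨hγ0, hγ1⟩ := hγ
  obtain ⟨hε0, hε1⟩ := hε
  set c := β / γ with hcdef
  have hc : 0 < c := div_pos hβ hγ0
  set a := ε ^ γ with hadef
  have ha0 : 0 < a := Real.rpow_pos_of_pos hε0 γ
  have ha1 : a < 1 := Real.rpow_lt_one hε0.le hε1 hγ0
  have h1a : (0:ℝ) < 1 - a := by linarith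
  have h1ε : (0:ℝ) < 1 - ε := by linarith
  set M := max (a ^ (c - 1)) 1 with hMdef
  have hM0 : (0:ℝ) < M := lt_of_lt_of_le one_pos (le_max_right _ _)
  set m := min (a ^ (c - 1)) 1 with hmdef
  have hm0 : (0:ℝ) < m := lt_min (Real.rpow_pos_of_pos ha0 _) one_pos
  set D := ε ^ (γ - 1) with hDdef
  have hD0 : (0:ℝ) < D := Real.rpow_pos_of_pos hε0 _
  set L := Real.log (1 - a) with hLdef
  -- the two bounding sequences
  set U : ℕ → ℝ := fun k => c * M * ((k:ℝ)^c * (1-a)^k) with hUdef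
  set Lo : ℕ → ℝ := fun k => (1/(1-ε)) * c * (m * (1-a)^(k+1) / (2 * D * (k:ℝ)^3)) with hLodef
  -- limits of the bounding log-sequences
  have hUlim : Tendsto (fun k : ℕ => Real.log (U k) / (k:ℝ)) atTop (nhds L) := by
    apply (aux_tendsto (Real.log c + Real.log M) 0 c L).congr'
    filter_upwards [eventually_ge_atTop 1] with k hk
    have hK : (0:ℝ) < (k:ℝ) := by exact_mod_cast Nat.pos_of_ne_zero (by omega)
    have h1 : Real.log (U k) = Real.log c + Real.log M + (c * Real.log k + (k:ℝ) * L) := by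
      rw [hUdef]
      simp only
      rw [Real.log_mul (by positivity) (by positivity),
        Real.log_mul hc.ne' hM0.ne',
        Real.log_mul (by positivity) (by positivity),
        Real.log_rpow hK, Real.log_pow, hLdef]
      all_goals push_cast
      all_goals ring
    rw [h1]
    ring
  have hLolim : Tendsto (fun k : ℕ => Real.log (Lo k) / (k:ℝ)) atTop (nhds L) := by
    apply (aux_tendsto
      (Real.log (1/(1-ε)) + Real.log c + Real.log m - Real.log 2 - Real.log D) 1 (-3) L).congr'
    filter_upwards [eventually_ge_atTop 1] with k hk
    have hK : (0:ℝ) < (k:ℝ) := by exact_mod_cast Nat.pos_of_ne_zero (by omega)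
    have h1 : Real.log (Lo k) = Real.log (1/(1-ε)) + Real.log c + Real.log m
        - Real.log 2 - Real.log D + (((k:ℝ)+1) * L - 3 * Real.log k) := by
      rw [hLodef]
      simp only
      rw [Real.log_mul (by positivity) (by positivity)]
      rw [Real.log_div (by positivity) (by positivity)]
      rw [Real.log_mul hm0.ne' (pow_ne_zero _ h1a.ne')]
      rw [Real.log_mul (mul_ne_zero two_ne_zero hD0.ne') (pow_ne_zero _ hK.ne')]
      rw [Real.log_mul two_ne_zero hD0.ne']
      rw [Real.log_mul (by positivity) hc.ne']
      rw [Real.log_pow, Real.log_pow, hLdef]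
      all_goals push_cast
      all_goals ring
    rw [h1]
    ring
  -- squeeze
  refine tendsto_of_tendsto_of_tendsto_of_le_of_le' hLolim hUlim ?_ ?_
  · filter_upwards [eventually_ge_atTop 2,
      tendsto_natCast_atTop_atTop.eventually_ge_atTop ((1-a)/(D*(1-ε)))] with k hk2 hkN
    have hK : (0:ℝ) < (k:ℝ) := by exact_mod_cast Nat.pos_of_ne_zero (by omega)
    have hlow := aux_lower γ β ε ⟨hγ0, hγ1⟩ hβ ⟨hε0, hε1⟩ hk2 hkN
    have hLo0 : 0 < Lo k := by rw [hLodef]; positivity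
    have := Real.log_le_log hLo0 hlow
    exact div_le_div_of_nonneg_right this hK.le
  · filter_upwards [eventually_ge_atTop 2,
      tendsto_natCast_atTop_atTop.eventually_ge_atTop ((1-a)/(D*(1-ε)))] with k hk2 hkN
    have hK : (0:ℝ) < (k:ℝ) := by exact_mod_cast Nat.pos_of_ne_zero (by omega)
    have hup := aux_upper γ β ε ⟨hγ0, hγ1⟩ hβ ⟨hε0, hε1⟩ (by omega : 1 ≤ k)
    have hlow := aux_lower γ β ε ⟨hγ0, hγ1⟩ hβ ⟨hε0, hε1⟩ hk2 hkN
    have hLo0 : 0 < Lo k := by rw [hLodef]; positivity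
    have hmu0 : 0 < muTail γ β ε k := lt_of_lt_of_le hLo0 hlow
    have := Real.log_le_log hmu0 hup
    exact div_le_div_of_nonneg_right this hK.le
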